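/- Let $R$ be a ring and $N_1 \subsetneq N_2 \subsetneq \cdots$ a strictly increasing chain of submodules of an $R$-module $M$, with union $N$. For each $i$ let $g_i \colon N \to I_i$ be an $R$-linear map with $g_i|_{N_{i-1}} = 0$ and $g_i \ne 0$ (setting $N_0 = 0$). Then the induced map $g \colon N \to \bigoplus_i I_i$ does not factor through the inclusion of any finite sub-direct-sum $\bigoplus_{i \in F} I_i$ for a finite set $F$. -/
import Mathlib

open DirectSum

/-- With `gᵢ` as above (vanishing on `Nᵢ` but nonzero), the induced map
`G : N → ⨁ᵢ Iᵢ` does not factor through any finite sub-direct-sum. -/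
theorem stmt_11 {R M : Type*} [Ring R] [AddCommGroup M] [Module R M]
    (N : ℕ → Submodule R M) (hN : StrictMono N)
    {I : ℕ → Type*} [∀ i, AddCommGroup (I i)] [∀ i, Module R (I i)]
    (g : ∀ i : ℕ, ↥(⨆ n, N n) →ₗ[R] I i)
    (hg : ∀ (i : ℕ) (x : ↥(⨆ n, N n)), (x : M) ∈ N i → g i x = 0)
    (hg0 : ∀ i : ℕ, g i ≠ 0)
    (G : ↥(⨆ n, N n) →ₗ[R] ⨁ i, I i)
    (hG : ∀ (i : ℕ) (x : ↥(⨆ n, N n)), G x i = g i x) :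
    ¬ ∃ F : Finset ℕ, ∀ (x : ↥(⨆ n, N n)) (j : ℕ), j ∉ F → G x j = 0 := by
  rintro ⟨F, hF⟩
  obtain ⟨j, hj⟩ := Infinite.exists_notMem_finset F
  obtain ⟨x, hx⟩ := DFunLike.ne_iff.mp (hg0 j)
  exact hx (by simpa [hG] using hF x j hj)
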